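/- Let G be a group with infinite cyclic center Z = ⟨z⟩ such that G ≅ Z × G/Z. Then every automorphism of G descends to an automorphism of G/Z, giving a surjective homomorphism Aut(G) → Aut(G/Z) which splits, and its kernel is the group of transvection automorphisms (automorphisms that induce the identity on G/Z). -/

import Mathlib

section Aux

variable {G : Type*} [Group G]

lemma auxCenterMap (e : G ≃* G) :
    (Subgroup.center G).map e.toMonoidHom = Subgroup.center G :=
  (Subgroup.characteristic_iff_map_eq.mp Subgroup.centerCharacteristic) e

/-- The descended automorphism. -/
noncomputable def auxDescend (e : MulAut G) : MulAut (G ⧸ Subgroup.center G) :=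
  QuotientGroup.congr (Subgroup.center G) (Subgroup.center G) e (auxCenterMap e)

lemma auxDescend_mk (e : MulAut G) (x : G) :
    auxDescend e (QuotientGroup.mk x) = QuotientGroup.mk (e x) :=
  QuotientGroup.congr_mk _ _ _ _ x

/-- The descent homomorphism `π`. -/
noncomputable def auxPi : MulAut G →* MulAut (G ⧸ Subgroup.center G) :=
  MonoidHom.mk' auxDescend (by
    intro a b
    ext q
    induction q using QuotientGroup.induction_on with
    | H x =>
      rw [MulAut.mul_apply]
      show auxDescend (a * b) _ = auxDescend a (auxDescend b _)
      rw [auxDescend_mk, auxDescend_mk, auxDescend_mk]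
      rfl)

end Aux

/-- Let `G` be a group with infinite cyclic center `Z = ⟨z⟩` such that the quotient
map `G → G/Z` splits (so `G ≅ Z × G/Z`).  Then every automorphism of `G` descends
to an automorphism of `G/Z`, giving a surjective homomorphism
`Aut(G) → Aut(G/Z)` which splits, and whose kernel consists exactly of the
transvection automorphisms. -/
theorem aut_descends_to_quotient_by_center {G : Type*} [Group G] (z : G)
    (hz : Subgroup.zpowers z = Subgroup.center G) (hinf : ¬ IsOfFinOrder z)
    (hsplit : ∃ s : G ⧸ Subgroup.center G →* G,
      (QuotientGroup.mk' (Subgroup.center G)).comp s =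
        MonoidHom.id (G ⧸ Subgroup.center G)) :
    ∃ π : MulAut G →* MulAut (G ⧸ Subgroup.center G),
      (∀ (e : MulAut G) (x : G), π e (QuotientGroup.mk x) = QuotientGroup.mk (e x)) ∧
      Function.Surjective π ∧
      (∃ s : MulAut (G ⧸ Subgroup.center G) →* MulAut G,
        π.comp s = MonoidHom.id (MulAut (G ⧸ Subgroup.center G))) ∧
      (∀ e : MulAut G, e ∈ π.ker ↔
        ∃ t : G →* Multiplicative ℤ,
          ∀ x : G, e x = x * z ^ Multiplicative.toAdd (t x)) := by
  classical
  obtain ⟨s, hs⟩ := hsplit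
  set Z := Subgroup.center G with hZ
  have hs' : ∀ q : G ⧸ Z, QuotientGroup.mk (s q) = q := fun q =>
    DFunLike.congr_fun hs q
  have hinj : Function.Injective fun n : ℤ => z ^ n :=
    injective_zpow_iff_not_isOfFinOrder.mpr hinf
  -- the isomorphism G ≃* Z × G/Z
  have hc : ∀ x : G, x * (s (QuotientGroup.mk x))⁻¹ ∈ Z := by
    intro x
    rw [← QuotientGroup.eq_one_iff, QuotientGroup.mk_mul, QuotientGroup.mk_inv, hs',
      mul_inv_cancel]
  let φ : G ≃* Z × (G ⧸ Z) :=
    { toFun := fun x => (⟨x * (s (QuotientGroup.mk x))⁻¹, hc x⟩, QuotientGroup.mk x)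
      invFun := fun p => (p.1 : G) * s p.2
      left_inv := by intro x; simp; exact inv_mul_cancel_right _ _
      right_inv := by
        rintro ⟨⟨c, hcm⟩, q⟩
        have hmk : QuotientGroup.mk (c * s q) = q := by
          have h1 : (QuotientGroup.mk c : G ⧸ Z) = 1 := (QuotientGroup.eq_one_iff c).mpr hcm
          rw [QuotientGroup.mk_mul, h1, hs', one_mul]
        simp only [hmk, Prod.mk.injEq, Subtype.mk.injEq]
        exact ⟨by rw [hmk]; group, trivial⟩
      map_mul' := by
        intro x y
        have hy := hc y
        have hcomm : ∀ g : G, g * (y * (s (QuotientGroup.mk y))⁻¹) =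
            (y * (s (QuotientGroup.mk y))⁻¹) * g := fun g =>
          (Subgroup.mem_center_iff.mp hy g)
        ext
        · show x * y * (s (QuotientGroup.mk (x * y)))⁻¹ =
            (x * (s (QuotientGroup.mk x))⁻¹) * (y * (s (QuotientGroup.mk y))⁻¹)
          calc x * y * (s (QuotientGroup.mk (x * y)))⁻¹
              = x * ((y * (s (QuotientGroup.mk y))⁻¹) * (s (QuotientGroup.mk x))⁻¹) := by
                rw [show (QuotientGroup.mk (x * y) : G ⧸ Z) =
                  QuotientGroup.mk x * QuotientGroup.mk y from rfl, map_mul, mul_inv_rev]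
                group
                rfl
            _ = x * ((s (QuotientGroup.mk x))⁻¹ * (y * (s (QuotientGroup.mk y))⁻¹)) := by
                rw [hcomm]
            _ = x * (s (QuotientGroup.mk x))⁻¹ * (y * (s (QuotientGroup.mk y))⁻¹) := by
                group
        · show (QuotientGroup.mk (x * y) : G ⧸ Z) = _
          push_cast; rfl }
  have hφ2 : ∀ x : G, (φ x).2 = QuotientGroup.mk x := fun _ => rfl
  have hφsymm : ∀ p : Z × (G ⧸ Z), φ.symm p = (p.1 : G) * s p.2 := fun _ => rfl
  -- the section σ
  let σfun : MulAut (G ⧸ Z) → MulAut G := fun f =>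
    φ.trans ((MulEquiv.prodCongr (MulEquiv.refl Z) f).trans φ.symm)
  have hσfun : ∀ f x, σfun f x = φ.symm ((φ x).1, f (φ x).2) := fun _ _ => rfl
  have hσmul : ∀ f g : MulAut (G ⧸ Z), σfun (f * g) = σfun f * σfun g := by
    intro f g
    ext x
    show σfun (f * g) x = σfun f (σfun g x)
    rw [hσfun, hσfun, hσfun, MulEquiv.apply_symm_apply]
    rfl
  let σ : MulAut (G ⧸ Z) →* MulAut G := MonoidHom.mk' σfun hσmul
  have hπσ : ∀ (f : MulAut (G ⧸ Z)) (x : G),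
      QuotientGroup.mk (σ f x) = f (QuotientGroup.mk x) := by
    intro f x
    show QuotientGroup.mk (σfun f x) = _
    rw [hσfun, hφsymm]
    have h1 : (QuotientGroup.mk (((φ x).1 : G)) : G ⧸ Z) = 1 :=
      (QuotientGroup.eq_one_iff _).mpr (φ x).1.2
    rw [QuotientGroup.mk_mul, h1, hs', one_mul, hφ2]
  refine ⟨auxPi, fun e x => auxDescend_mk e x, ?_, ?_, ?_⟩
  · -- surjective
    intro f
    refine ⟨σ f, ?_⟩
    ext q
    induction q using QuotientGroup.induction_on with
    | H x => rw [show auxPi (σ f) = auxDescend (σ f) from rfl, auxDescend_mk, hπσ]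
  · -- splits
    refine ⟨σ, ?_⟩
    ext f q
    induction q using QuotientGroup.induction_on with
    | H x =>
      show auxDescend (σ f) _ = f _
      rw [auxDescend_mk, hπσ]
  · -- kernel
    intro e
    rw [MonoidHom.mem_ker]
    constructor
    · intro he
      have hfix : ∀ x : G, (QuotientGroup.mk (e x) : G ⧸ Z) = QuotientGroup.mk x := by
        intro x
        have h := MulEquiv.ext_iff.mp he (QuotientGroup.mk x : G ⧸ Z)
        rw [show auxPi e = auxDescend e from rfl, auxDescend_mk] at h
        simpa using h
      have hmem : ∀ x : G, x⁻¹ * e x ∈ Subgroup.zpowers z := by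
        intro x
        rw [hz]
        exact QuotientGroup.eq.mp (hfix x).symm
      choose k hk using fun x => Subgroup.mem_zpowers_iff.mp (hmem x)
      have hex : ∀ x : G, e x = x * z ^ k x := by
        intro x
        rw [hk x]; group
      have hcen : ∀ (n : ℤ) (g : G), g * z ^ n = z ^ n * g := by
        intro n g
        have : z ^ n ∈ Z := by rw [← hz]; exact Subgroup.zpow_mem _ (Subgroup.mem_zpowers z) n
        exact Subgroup.mem_center_iff.mp this g
      have hkadd : ∀ x y : G, k (x * y) = k x + k y := by
        intro x y
        apply hinj
        show z ^ k (x * y) = z ^ (k x + k y)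
        rw [hk (x * y), map_mul, hex x, hex y, zpow_add]
        rw [mul_inv_rev, ← mul_assoc]
        calc y⁻¹ * x⁻¹ * (x * z ^ k x) * (y * z ^ k y)
            = y⁻¹ * z ^ k x * (y * z ^ k y) := by group
          _ = z ^ k x * y⁻¹ * (y * z ^ k y) := by rw [hcen (k x) y⁻¹]
          _ = z ^ k x * z ^ k y := by group
      refine ⟨MonoidHom.mk' (fun x => Multiplicative.ofAdd (k x)) ?_, ?_⟩
      · intro a b
        simp only [← ofAdd_add, hkadd]
      · intro x
        simpa using hex x
    · rintro ⟨t, ht⟩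
      have hz1 : (QuotientGroup.mk z : G ⧸ Z) = 1 :=
        (QuotientGroup.eq_one_iff z).mpr (hz ▸ Subgroup.mem_zpowers z)
      ext q
      induction q using QuotientGroup.induction_on with
      | H x =>
        show auxDescend e _ = _
        rw [auxDescend_mk, ht x, QuotientGroup.mk_mul]
        have h2 : (QuotientGroup.mk (z ^ Multiplicative.toAdd (t x)) : G ⧸ Z) = 1 := by
          rw [QuotientGroup.eq_one_iff]
          exact hz ▸ Subgroup.zpow_mem _ (Subgroup.mem_zpowers z) _
        rw [h2, mul_one]
        rfl
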